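/- Let k ≥ 2 be an integer, p a prime, and α ≥ 1 an integer. For all complex s with Re(s) > 0, G_k(s, p^α) = (1 - 1/p)^{-1} (1 - p^{-s})^k ∑_{j=0}^∞ p^{-js} ( d_{k-1}(p^{α+j}) + (1 - p^{s-1}) d_k(p^{α+j-1}) ), the series converging absolutely. -/

import Mathlib

/-- The `k`-th divisor function `d_k`, the `k`-fold Dirichlet convolution of the
constant function `1`. -/
noncomputable def dk (k : ℕ) : ArithmeticFunction ℕ := ArithmeticFunction.zeta ^ k

/-- The local factor `g_k(s, q) = ∏_{p | q} (1 - p^{-s})^k ∑_{j≥0} d_k(p^{j+α_p}) p^{-js}`,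
where `q = ∏_p p^{α_p}`. -/
noncomputable def gk (k : ℕ) (s : ℂ) (q : ℕ) : ℂ :=
  ∏ p ∈ q.primeFactors,
    ((1 - (p : ℂ) ^ (-s)) ^ k *
      ∑' j : ℕ, (dk k (p ^ (j + q.factorization p)) : ℂ) * (p : ℂ) ^ (-(j : ℂ) * s))

/-- `G_k(s, q) = ∑_{d | q} (μ(d)/φ(d)) d^s ∑_{e | d} μ(e) e^{-s} g_k(s, qe/d)`. -/
noncomputable def Gk (k : ℕ) (s : ℂ) (q : ℕ) : ℂ :=
  ∑ d ∈ q.divisors,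
    ((ArithmeticFunction.moebius d : ℂ) / (d.totient : ℂ)) * (d : ℂ) ^ s *
      ∑ e ∈ d.divisors, (ArithmeticFunction.moebius e : ℂ) * (e : ℂ) ^ (-s) * gk k s (q * e / d)

lemma dk_succ_apply {p : ℕ} (hp : p.Prime) (k m : ℕ) :
    dk (k + 1) (p ^ m) = ∑ i ∈ Finset.range (m + 1), dk k (p ^ i) := by
  rw [dk, pow_succ, ArithmeticFunction.mul_zeta_apply, Nat.sum_divisors_prime_pow hp]
  rfl

lemma dk_pascal {p : ℕ} (hp : p.Prime) (k m : ℕ) :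
    dk (k + 1) (p ^ (m + 1)) = dk k (p ^ (m + 1)) + dk (k + 1) (p ^ m) := by
  rw [dk_succ_apply hp, Finset.sum_range_succ, dk_succ_apply hp]
  ring

lemma dk_le {p : ℕ} (hp : p.Prime) (k j : ℕ) : dk k (p ^ j) ≤ (j + 1) ^ k := by
  induction k generalizing j with
  | zero =>
    simp only [dk, pow_zero]
    rcases eq_or_ne j 0 with rfl | hj
    · simp
    · have : p ^ j ≠ 1 := (Nat.one_lt_pow hj hp.one_lt).ne'
      simp [ArithmeticFunction.one_apply, this, hp.ne_one, hj]
  | succ k ih =>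
    rw [dk_succ_apply hp]
    calc ∑ i ∈ Finset.range (j + 1), dk k (p ^ i)
        ≤ ∑ _i ∈ Finset.range (j + 1), (j + 1) ^ k := by
          refine Finset.sum_le_sum fun i hi => (ih i).trans ?_
          exact Nat.pow_le_pow_left (by simp at hi; omega) k
      _ = (j + 1) ^ (k + 1) := by
          rw [Finset.sum_const, Finset.card_range, smul_eq_mul, pow_succ]; ring

lemma aux_summable_pow {r : ℝ} (h0 : 0 ≤ r) (h1 : r < 1) (k c : ℕ) :
    Summable (fun j : ℕ => ((j + c + 1 : ℕ) : ℝ) ^ k * r ^ j) := by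
  have key : ∀ j : ℕ, ((j + c + 1 : ℕ) : ℝ) ^ k * r ^ j
      = ∑ i ∈ Finset.range (k + 1),
        (((c + 1 : ℕ) : ℝ) ^ (k - i) * (k.choose i : ℝ)) * ((j : ℝ) ^ i * r ^ j) := by
    intro j
    have : ((j + c + 1 : ℕ) : ℝ) ^ k = ((j : ℝ) + ((c : ℝ) + 1)) ^ k := by push_cast; ring_nf
    rw [this, add_pow, Finset.sum_mul]
    exact Finset.sum_congr rfl fun i _ => by push_cast; ring
  simp_rw [key]
  apply summable_sum
  intro i _
  apply Summable.mul_left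
  exact summable_pow_mul_geometric_of_norm_lt_one i
    (by rwa [Real.norm_eq_abs, abs_of_nonneg h0])

lemma dk_summable_norm {p : ℕ} (hp : p.Prime) {x : ℂ} (hx : ‖x‖ < 1) (k β : ℕ) :
    Summable (fun j : ℕ => ‖(dk k (p ^ (j + β)) : ℂ) * x ^ j‖) := by
  refine Summable.of_nonneg_of_le (fun j => norm_nonneg _) (fun j => ?_)
    (aux_summable_pow (norm_nonneg x) hx k β)
  rw [norm_mul, norm_pow, Complex.norm_natCast]
  have h1 : (dk k (p ^ (j + β)) : ℝ) ≤ ((j + β + 1 : ℕ) : ℝ) ^ k := by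
    have := dk_le hp k (j + β)
    push_cast
    exact_mod_cast this
  exact mul_le_mul_of_nonneg_right h1 (pow_nonneg (norm_nonneg x) j)

lemma dk_tsum_eq {p : ℕ} (hp : p.Prime) {x : ℂ} (hx : ‖x‖ < 1) (k : ℕ) :
    ∑' j : ℕ, (dk k (p ^ j) : ℂ) * x ^ j = ((1 - x)⁻¹) ^ k := by
  induction k with
  | zero =>
    rw [pow_zero, tsum_eq_single 0]
    · simp [dk]
    · intro j hj
      have : p ^ j ≠ 1 := (Nat.one_lt_pow hj hp.one_lt).ne'
      simp [dk, ArithmeticFunction.one_apply, this, hp.ne_one, hj]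
  | succ k ih =>
    have hf : Summable fun j : ℕ => ‖(dk k (p ^ j) : ℂ) * x ^ j‖ := by
      simpa using dk_summable_norm hp hx k 0
    have hg : Summable fun j : ℕ => ‖x ^ j‖ := by
      simp only [norm_pow]
      exact summable_geometric_of_lt_one (norm_nonneg x) hx
    have key := tsum_mul_tsum_eq_tsum_sum_antidiagonal_of_summable_norm hf hg
    rw [ih, tsum_geometric_of_norm_lt_one hx] at key
    rw [pow_succ, key]
    refine tsum_congr fun n => ?_
    rw [Finset.Nat.sum_antidiagonal_eq_sum_range_succ_mk, dk_succ_apply hp, Nat.cast_sum,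
      Finset.sum_mul]
    refine Finset.sum_congr rfl fun i hi => ?_
    rw [mul_assoc, ← pow_add]
    congr 2
    simp only [Finset.mem_range] at hi
    omega

lemma norm_p_cpow_lt_one {p : ℕ} (hp : p.Prime) {s : ℂ} (hs : 0 < s.re) :
    ‖(p : ℂ) ^ (-s)‖ < 1 := by
  have hp0 : (0:ℝ) < (p : ℝ) := by exact_mod_cast hp.pos
  rw [show ((p : ℕ) : ℂ) = (((p : ℕ) : ℝ) : ℂ) by push_cast; rfl,
    Complex.norm_cpow_eq_rpow_re_of_pos hp0, Complex.neg_re]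
  exact Real.rpow_lt_one_of_one_lt_of_neg (by exact_mod_cast hp.one_lt) (by linarith)

lemma gk_prime_pow {p : ℕ} (hp : p.Prime) {s : ℂ} (hs : 0 < s.re) (k β : ℕ) :
    gk k s (p ^ β) =
      (1 - (p : ℂ) ^ (-s)) ^ k *
        ∑' j : ℕ, (dk k (p ^ (j + β)) : ℂ) * ((p : ℂ) ^ (-s)) ^ j := by
  have hx : ‖(p : ℂ) ^ (-s)‖ < 1 := norm_p_cpow_lt_one hp hs
  have hcpow : ∀ j : ℕ, (p : ℂ) ^ (-(j : ℂ) * s) = ((p : ℂ) ^ (-s)) ^ j := fun j => by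
    rw [show -(j : ℂ) * s = (j : ℂ) * (-s) by ring, Complex.cpow_nat_mul]
  rcases eq_or_ne β 0 with rfl | hβ
  · have h1x : (1 : ℂ) - (p : ℂ) ^ (-s) ≠ 0 := by
      intro h
      have : (p : ℂ) ^ (-s) = 1 := by linear_combination -h
      rw [this] at hx; simp at hx
    rw [pow_zero, gk, Nat.primeFactors_one, Finset.prod_empty]
    simp only [add_zero]
    rw [dk_tsum_eq hp hx, ← mul_pow, mul_inv_cancel₀ h1x, one_pow]
  · rw [gk, Nat.primeFactors_prime_pow hβ hp, Finset.prod_singleton,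
      hp.factorization_pow, Finsupp.single_eq_same]
    congr 1
    exact tsum_congr fun j => by rw [hcpow j]

/-- For `k ≥ 2`, a prime `p`, `α ≥ 1`, and `Re(s) > 0`:
`G_k(s, p^α) = (1 - 1/p)⁻¹ (1 - p^{-s})^k
  ∑_{j≥0} p^{-js} ( d_{k-1}(p^{α+j}) + (1 - p^{s-1}) d_k(p^{α+j-1}) )`,
the series converging absolutely. -/
theorem Gk_prime_pow_eq (k : ℕ) (hk : 2 ≤ k) (p : ℕ) (hp : p.Prime) (α : ℕ) (hα : 1 ≤ α)
    (s : ℂ) (hs : 0 < s.re) :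
    Summable (fun j : ℕ => ‖(p : ℂ) ^ (-(j : ℂ) * s) *
      ((dk (k - 1) (p ^ (α + j)) : ℂ) + (1 - (p : ℂ) ^ (s - 1)) * (dk k (p ^ (α + j - 1)) : ℂ))‖) ∧
    Gk k s (p ^ α) =
      (1 - 1 / (p : ℂ))⁻¹ * (1 - (p : ℂ) ^ (-s)) ^ k *
        ∑' j : ℕ, (p : ℂ) ^ (-(j : ℂ) * s) *
          ((dk (k - 1) (p ^ (α + j)) : ℂ) +
            (1 - (p : ℂ) ^ (s - 1)) * (dk k (p ^ (α + j - 1)) : ℂ)) := by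
  obtain ⟨b, rfl⟩ : ∃ b, k = b + 2 := ⟨k - 2, by omega⟩
  obtain ⟨a, rfl⟩ : ∃ a, α = a + 1 := ⟨α - 1, by omega⟩
  have hx : ‖(p : ℂ) ^ (-s)‖ < 1 := norm_p_cpow_lt_one hp hs
  set x : ℂ := (p : ℂ) ^ (-s) with hxdef
  have hcpow : ∀ j : ℕ, (p : ℂ) ^ (-(j : ℂ) * s) = x ^ j := fun j => by
    rw [hxdef, show -(j : ℂ) * s = (j : ℂ) * (-s) by ring, Complex.cpow_nat_mul]
  have hk1 : b + 2 - 1 = b + 1 := by omega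
  have hidx1 : ∀ j : ℕ, a + 1 + j = j + (a + 1) := fun j => by omega
  have hidx2 : ∀ j : ℕ, a + 1 + j - 1 = j + a := fun j => by omega
  set w : ℂ := 1 - (p : ℂ) ^ (s - 1) with hwdef
  have S1 := dk_summable_norm hp hx (b + 1) (a + 1)
  have S2 := dk_summable_norm hp hx (b + 2) a
  constructor
  · refine Summable.of_nonneg_of_le (fun j => norm_nonneg _) (fun j => ?_)
      (S1.add (S2.mul_left ‖w‖))
    rw [hcpow j, hk1, hidx2 j, hidx1 j]
    have : x ^ j * ((dk (b + 1) (p ^ (j + (a + 1))) : ℂ) + w * (dk (b + 2) (p ^ (j + a)) : ℂ))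
        = (dk (b + 1) (p ^ (j + (a + 1))) : ℂ) * x ^ j
          + w * ((dk (b + 2) (p ^ (j + a)) : ℂ) * x ^ j) := by ring
    rw [this]
    refine (norm_add_le _ _).trans ?_
    simp [norm_mul]
  · have hA : Summable fun j : ℕ => (dk (b + 2) (p ^ (j + (a + 1))) : ℂ) * x ^ j :=
      (dk_summable_norm hp hx (b + 2) (a + 1)).of_norm
    have hB : Summable fun j : ℕ => (dk (b + 2) (p ^ (j + a)) : ℂ) * x ^ j := S2.of_norm
    have htsum : (∑' j : ℕ, (p : ℂ) ^ (-(j : ℂ) * s) *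
          ((dk (b + 2 - 1) (p ^ (a + 1 + j)) : ℂ) + w * (dk (b + 2) (p ^ (a + 1 + j - 1)) : ℂ)))
        = (∑' j : ℕ, (dk (b + 2) (p ^ (j + (a + 1))) : ℂ) * x ^ j)
          - (p : ℂ) ^ (s - 1) * ∑' j : ℕ, (dk (b + 2) (p ^ (j + a)) : ℂ) * x ^ j := by
      rw [← tsum_mul_left, ← Summable.tsum_sub hA (hB.mul_left _)]
      refine tsum_congr fun j => ?_
      rw [hcpow j, hk1, hidx2 j, hidx1 j]
      have pascal : (dk (b + 2) (p ^ (j + (a + 1))) : ℂ)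
          = (dk (b + 1) (p ^ (j + (a + 1))) : ℂ) + (dk (b + 2) (p ^ (j + a)) : ℂ) := by
        have := dk_pascal hp (b + 1) (j + a)
        rw [show j + (a + 1) = (j + a) + 1 by omega]
        exact_mod_cast this
      rw [pascal, hwdef]
      ring
    rw [htsum]
    -- evaluate the divisor sum
    rw [Gk, Nat.sum_divisors_prime_pow hp]
    rw [Finset.sum_eq_add_of_mem 0 1 (by simp) (by simp) (by norm_num) ?vanish]
    case vanish =>
      intro c hc ⟨hc0, hc1⟩
      rw [ArithmeticFunction.moebius_apply_prime_pow hp hc0, if_neg hc1]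
      simp
    -- the d = 1 term
    rw [pow_zero, Nat.divisors_one, Finset.sum_singleton]
    -- the d = p term
    rw [pow_one, hp.divisors, Finset.sum_pair hp.one_lt.ne]
    -- simplify arithmetic function values and nat arguments
    rw [ArithmeticFunction.moebius_apply_one, ArithmeticFunction.moebius_apply_prime hp]
    rw [show p ^ (a + 1) * 1 / 1 = p ^ (a + 1) by simp,
        show p ^ (a + 1) * 1 / p = p ^ a by
          rw [mul_one, pow_succ, Nat.mul_div_cancel _ hp.pos],
        show p ^ (a + 1) * p / p = p ^ (a + 1) from Nat.mul_div_cancel _ hp.pos]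
    rw [gk_prime_pow hp hs (b + 2) (a + 1), gk_prime_pow hp hs (b + 2) a]
    rw [← hxdef]
    -- now pure algebra
    have hpne : (p : ℂ) ≠ 0 := by exact_mod_cast hp.pos.ne'
    have hφ : ((p.totient : ℕ) : ℂ) = (p : ℂ) - 1 := by
      rw [Nat.totient_prime hp, Nat.cast_sub hp.one_le]
      push_cast; ring
    have hx0 : x ≠ 0 := by
      rw [hxdef]
      simp only [ne_eq, Complex.cpow_eq_zero_iff, not_and_or, not_not]
      exact Or.inl hpne
    have hX : (p : ℂ) ^ s = x⁻¹ := by rw [hxdef, ← Complex.cpow_neg, neg_neg]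
    have hs1 : (p : ℂ) ^ (s - 1) = x⁻¹ / (p : ℂ) := by
      rw [Complex.cpow_sub _ _ hpne, Complex.cpow_one, hX]
    have hφne : (p : ℂ) - 1 ≠ 0 := by
      intro h
      have : (p : ℂ) = 1 := by linear_combination h
      have h1 : (p : ℕ) = 1 := by exact_mod_cast this
      have := hp.two_le
      omega
    have hinv : (1 - 1 / (p : ℂ))⁻¹ = (p : ℂ) / ((p : ℂ) - 1) := by
      rw [show (1 : ℂ) - 1 / (p : ℂ) = ((p : ℂ) - 1) / (p : ℂ) by field_simp, inv_div]
    rw [hφ, hs1, hX, hinv]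
    simp only [Nat.cast_one, Nat.totient_one, Complex.one_cpow, Int.cast_one, Int.cast_neg]
    field_simp
    ring
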